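/- Let $(S,d)$ be a metric space with $d$ bounded by $\Delta$, let $q$ be a Markov kernel on $S$, and let $c$ be a Markovian coupling of $\{q(x,\cdot)\}$ such that $\int d(y,\tilde y)\,c((x,\tilde x), dy\,d\tilde y) \le \gamma\, d(x,\tilde x)$ for all $x,\tilde x$ in an open set $\mathcal{O} \subseteq S$, where $\gamma \in (0,1)$. Then for any probability measures $\mu,\nu$ on $S$ and any $n \in \mathbb{N}$, the $L^1$-Wasserstein distance satisfies $\mathcal{W}_d(\mu q^n, \nu q^n) \le \gamma^n \mathcal{W}_d(\mu,\nu) + \Delta\,(\mathbb{P}_\mu[\exists k < n: X_k \notin \mathcal{O}] + \mathbb{P}_\nu[\exists k < n: X_k \notin \mathcal{O}])$, where $(X_k,\mathbb{P}_\mu)$ and $(X_k,\mathbb{P}_\nu)$ are Markov chains with kernel $q$ started from $\mu$, $\nu$. -/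

import Mathlib

open MeasureTheory ProbabilityTheory ENNReal

/-- Couplings of two measures. -/
def couplings {S : Type*} [MeasurableSpace S] (μ ν : Measure S) : Set (Measure (S × S)) :=
  {η | η.map Prod.fst = μ ∧ η.map Prod.snd = ν}

/-- The `L¹`-Wasserstein (Kantorovich–Rubinstein) distance w.r.t. a cost `d`,
as an infimum over couplings. -/
noncomputable def wassersteinDist {S : Type*} [MeasurableSpace S] (d : S → S → ℝ)
    (μ ν : Measure S) : ℝ≥0∞ :=
  ⨅ η ∈ couplings μ ν, ∫⁻ p, ENNReal.ofReal (d p.1 p.2) ∂η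

/-- The distribution after `n` steps of the Markov chain with kernel `q` started in `μ`. -/
noncomputable def chainLaw {S : Type*} [MeasurableSpace S] (q : Kernel S S)
    (μ : Measure S) : ℕ → Measure S
  | 0 => μ
  | (n+1) => (chainLaw q μ n).bind (fun x => q x)

/-- The law of `X_n` restricted to the event that the chain stayed in `O`
at all times `k < n`. In particular `(stayLaw q O μ n) univ = P_μ[∀ k < n, X_k ∈ O]`. -/
noncomputable def stayLaw {S : Type*} [MeasurableSpace S] (q : Kernel S S) (O : Set S)
    (μ : Measure S) : ℕ → Measure S
  | 0 => μ
  | (n+1) => ((stayLaw q O μ n).restrict O).bind (fun x => q x)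


section Helpers

variable {α β : Type*} [MeasurableSpace α] [MeasurableSpace β]

lemma bind_mono_left {μ ν : Measure α} (κ : Kernel α β) (h : μ ≤ ν) :
    μ.bind (fun x => κ x) ≤ ν.bind (fun x => κ x) := by
  refine Measure.le_iff.2 fun s hs => ?_
  rw [Measure.bind_apply hs (Kernel.measurable _).aemeasurable, Measure.bind_apply hs (Kernel.measurable _).aemeasurable]
  exact lintegral_mono' h le_rfl

lemma bind_add_meas (κ : Kernel α β) (μ ν : Measure α) :
    (μ + ν).bind (fun x => κ x) = μ.bind (fun x => κ x) + ν.bind (fun x => κ x) := by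
  ext s hs
  rw [Measure.coe_add, Pi.add_apply, Measure.bind_apply hs (Kernel.measurable _).aemeasurable,
    Measure.bind_apply hs (Kernel.measurable _).aemeasurable, Measure.bind_apply hs (Kernel.measurable _).aemeasurable,
    lintegral_add_measure]

lemma lintegral_bind_le (κ : Kernel α β) (μ : Measure α) (f : β → ℝ≥0∞) :
    ∫⁻ y, f y ∂(μ.bind (fun x => κ x)) ≤ ∫⁻ x, ∫⁻ y, f y ∂(κ x) ∂μ := by
  rw [lintegral_def]
  refine iSup₂_le fun g hg => ?_
  rw [← SimpleFunc.lintegral_eq_lintegral,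
    Measure.lintegral_bind (Kernel.measurable κ).aemeasurable g.measurable.aemeasurable]
  exact lintegral_mono fun x => lintegral_mono hg

/-- The coupled chain, restricted at each step to the event `A`. -/
noncomputable def auxChain (c : Kernel (α × α) (α × α)) (A : Set (α × α))
    (η : Measure (α × α)) : ℕ → Measure (α × α)
  | 0 => η
  | (n+1) => ((auxChain c A η n).restrict A).bind (fun p => c p)

@[simp] lemma auxChain_zero (c : Kernel (α × α) (α × α)) (A : Set (α × α))
    (η : Measure (α × α)) : auxChain c A η 0 = η := rfl

lemma auxChain_succ (c : Kernel (α × α) (α × α)) (A : Set (α × α))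
    (η : Measure (α × α)) (n : ℕ) :
    auxChain c A η (n+1) = ((auxChain c A η n).restrict A).bind (fun p => c p) := rfl

lemma auxChain_mono {c : Kernel (α × α) (α × α)} {A B : Set (α × α)} (hAB : A ⊆ B)
    (η : Measure (α × α)) : ∀ n, auxChain c A η n ≤ auxChain c B η n
  | 0 => le_rfl
  | (n+1) => bind_mono_left c (Measure.restrict_mono hAB (auxChain_mono hAB η n))

lemma stayLaw_succ {q : Kernel α α} {O : Set α} {μ : Measure α} (n : ℕ) :
    stayLaw q O μ (n+1) = ((stayLaw q O μ n).restrict O).bind (fun x => q x) := rfl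

lemma auxChain_map_fst {c : Kernel (α × α) (α × α)} {q : Kernel α α}
    (hc1 : ∀ p : α × α, (c p).map Prod.fst = q p.1)
    {O : Set α} (hO : MeasurableSet O) {η : Measure (α × α)} {μ : Measure α}
    (hη : η.map Prod.fst = μ) :
    ∀ n, (auxChain c (Prod.fst ⁻¹' O) η n).map Prod.fst = stayLaw q O μ n
  | 0 => hη
  | (n+1) => by
    have IH := auxChain_map_fst hc1 hO hη n
    rw [auxChain_succ, stayLaw_succ]
    ext s hs
    rw [Measure.map_apply measurable_fst hs,
      Measure.bind_apply (measurable_fst hs) (Kernel.measurable c).aemeasurable,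
      Measure.bind_apply hs (Kernel.measurable q).aemeasurable, ← IH,
      Measure.restrict_map measurable_fst hO,
      lintegral_map (Kernel.measurable_coe q hs) measurable_fst]
    refine lintegral_congr fun p => ?_
    rw [← hc1 p, Measure.map_apply measurable_fst hs]

lemma auxChain_map_snd {c : Kernel (α × α) (α × α)} {q : Kernel α α}
    (hc2 : ∀ p : α × α, (c p).map Prod.snd = q p.2)
    {O : Set α} (hO : MeasurableSet O) {η : Measure (α × α)} {ν : Measure α}
    (hη : η.map Prod.snd = ν) :
    ∀ n, (auxChain c (Prod.snd ⁻¹' O) η n).map Prod.snd = stayLaw q O ν n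
  | 0 => hη
  | (n+1) => by
    have IH := auxChain_map_snd hc2 hO hη n
    rw [auxChain_succ, stayLaw_succ]
    ext s hs
    rw [Measure.map_apply measurable_snd hs,
      Measure.bind_apply (measurable_snd hs) (Kernel.measurable c).aemeasurable,
      Measure.bind_apply hs (Kernel.measurable q).aemeasurable, ← IH,
      Measure.restrict_map measurable_snd hO,
      lintegral_map (Kernel.measurable_coe q hs) measurable_snd]
    refine lintegral_congr fun p => ?_
    rw [← hc2 p, Measure.map_apply measurable_snd hs]

lemma auxChain_add_le {c : Kernel (α × α) (α × α)} {A B : Set (α × α)}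
    (hA : MeasurableSet A) (hB : MeasurableSet B) (η : Measure (α × α)) :
    ∀ n, auxChain c A η n + auxChain c B η n
      ≤ auxChain c (A ∩ B) η n + auxChain c Set.univ η n
  | 0 => le_rfl
  | (n+1) => by
    set a := auxChain c A η n with ha
    set b := auxChain c B η n with hb
    set z := auxChain c (A ∩ B) η n with hz
    set Z := auxChain c Set.univ η n with hZ
    have hab : a + b ≤ z + Z := auxChain_add_le hA hB η n
    have haZ : a ≤ Z := auxChain_mono (Set.subset_univ A) η n
    have hbZ : b ≤ Z := auxChain_mono (Set.subset_univ B) η n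
    have key : a.restrict A + b.restrict B ≤ z.restrict (A ∩ B) + Z := by
      refine Measure.le_iff.2 fun E hE => ?_
      simp only [Measure.coe_add, Pi.add_apply, Measure.restrict_apply hE]
      have hEA : a (E ∩ A) = a (E ∩ A ∩ B) + a ((E ∩ A) \ B) :=
        (measure_inter_add_diff (E ∩ A) hB).symm
      have hEB : b (E ∩ B) = b (E ∩ B ∩ A) + b ((E ∩ B) \ A) :=
        (measure_inter_add_diff (E ∩ B) hA).symm
      have hBA : E ∩ B ∩ A = E ∩ A ∩ B := Set.inter_right_comm E B A
      have habT : a (E ∩ A ∩ B) + b (E ∩ A ∩ B) ≤ z (E ∩ A ∩ B) + Z (E ∩ A ∩ B) := by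
        have := Measure.le_iff'.1 hab (E ∩ A ∩ B)
        simpa using this
      calc a (E ∩ A) + b (E ∩ B)
          = (a (E ∩ A ∩ B) + b (E ∩ A ∩ B)) + (a ((E ∩ A) \ B) + b ((E ∩ B) \ A)) := by
            rw [hEA, hEB, hBA]; ring
        _ ≤ (z (E ∩ A ∩ B) + Z (E ∩ A ∩ B)) + (Z ((E ∩ A) \ B) + Z ((E ∩ B) \ A)) :=
            add_le_add habT (add_le_add (Measure.le_iff'.1 haZ _) (Measure.le_iff'.1 hbZ _))
        _ = z (E ∩ A ∩ B) + ((Z (E ∩ A ∩ B) + Z ((E ∩ A) \ B)) + Z ((E ∩ B) \ A)) := by ring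
        _ ≤ z (E ∩ (A ∩ B)) + Z E := by
            rw [← Set.inter_assoc]
            refine add_le_add_right ?_ _
            rw [measure_inter_add_diff (E ∩ A) hB]
            calc Z (E ∩ A) + Z ((E ∩ B) \ A) ≤ Z (E ∩ A) + Z (E \ A) :=
                  add_le_add_right
                    (measure_mono (Set.diff_subset_diff_left Set.inter_subset_left)) _
              _ = Z E := measure_inter_add_diff E hA
    rw [auxChain_succ, auxChain_succ, auxChain_succ, auxChain_succ, ← ha, ← hb, ← hz, ← hZ,
      ← bind_add_meas, ← bind_add_meas]
    calc (a.restrict A + b.restrict B).bind (fun p => c p)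
        ≤ (z.restrict (A ∩ B) + Z).bind (fun p => c p) := bind_mono_left c key
      _ = (z.restrict (A ∩ B) + Z.restrict Set.univ).bind (fun p => c p) := by
          rw [Measure.restrict_univ]

end Helpers

section MoreHelpers

variable {α : Type*} [MeasurableSpace α]

lemma chainLaw_succ (q : Kernel α α) (μ : Measure α) (n : ℕ) :
    chainLaw q μ (n+1) = (chainLaw q μ n).bind (fun x => q x) := rfl

lemma stayLaw_univ_eq (q : Kernel α α) (μ : Measure α) :
    ∀ n, stayLaw q Set.univ μ n = chainLaw q μ n
  | 0 => rfl
  | (n+1) => by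
    rw [stayLaw_succ, chainLaw_succ, Measure.restrict_univ, stayLaw_univ_eq q μ n]

lemma chainLaw_univ (q : Kernel α α) [IsMarkovKernel q] (μ : Measure α)
    [IsProbabilityMeasure μ] : ∀ n, chainLaw q μ n Set.univ = 1
  | 0 => measure_univ (μ := μ)
  | (n+1) => by
    rw [chainLaw_succ, Measure.bind_apply MeasurableSet.univ (Kernel.measurable q).aemeasurable]
    simp [measure_univ, chainLaw_univ q μ n]

lemma auxChain_cost {S : Type*} [MeasurableSpace S] [MetricSpace S]
    (c : Kernel (S × S) (S × S)) {𝒪 : Set S} (h𝒪 : MeasurableSet 𝒪)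
    {γ : ℝ} (hγ0 : 0 ≤ γ)
    (hcontr : ∀ x ∈ 𝒪, ∀ xt ∈ 𝒪,
      ∫⁻ p, ENNReal.ofReal (dist p.1 p.2) ∂(c (x, xt)) ≤ ENNReal.ofReal (γ * dist x xt))
    (η : Measure (S × S)) :
    ∀ n, ∫⁻ p, ENNReal.ofReal (dist p.1 p.2) ∂(auxChain c (𝒪 ×ˢ 𝒪) η n)
      ≤ ENNReal.ofReal γ ^ n * ∫⁻ p, ENNReal.ofReal (dist p.1 p.2) ∂η
  | 0 => by simp
  | (n+1) => by
    have IH := auxChain_cost c h𝒪 hγ0 hcontr η n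
    set ζ := auxChain c (𝒪 ×ˢ 𝒪) η n with hζ
    have hO2 : MeasurableSet (𝒪 ×ˢ 𝒪) := h𝒪.prod h𝒪
    rw [auxChain_succ, ← hζ]
    calc ∫⁻ p, ENNReal.ofReal (dist p.1 p.2) ∂((ζ.restrict (𝒪 ×ˢ 𝒪)).bind (fun p => c p))
        ≤ ∫⁻ x, ∫⁻ p, ENNReal.ofReal (dist p.1 p.2) ∂(c x) ∂(ζ.restrict (𝒪 ×ˢ 𝒪)) :=
          lintegral_bind_le c _ _
      _ ≤ ∫⁻ x, ENNReal.ofReal γ * ENNReal.ofReal (dist x.1 x.2) ∂(ζ.restrict (𝒪 ×ˢ 𝒪)) := by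
          refine lintegral_mono_ae (ae_restrict_of_forall_mem hO2 fun x hx => ?_)
          rw [← ENNReal.ofReal_mul hγ0]
          exact hcontr x.1 hx.1 x.2 hx.2
      _ = ENNReal.ofReal γ * ∫⁻ x, ENNReal.ofReal (dist x.1 x.2) ∂(ζ.restrict (𝒪 ×ˢ 𝒪)) :=
          lintegral_const_mul' _ _ ENNReal.ofReal_ne_top
      _ ≤ ENNReal.ofReal γ * (ENNReal.ofReal γ ^ n * ∫⁻ p, ENNReal.ofReal (dist p.1 p.2) ∂η) := by
          exact mul_le_mul_right
            ((lintegral_mono' Measure.restrict_le_self le_rfl).trans IH) _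
      _ = ENNReal.ofReal γ ^ (n+1) * ∫⁻ p, ENNReal.ofReal (dist p.1 p.2) ∂η := by ring

end MoreHelpers

/-- If a Markovian coupling `c` of a Markov kernel `q` on a metric space with metric
bounded by `Δ` contracts distances by a factor `γ ∈ (0,1)` on an open set `𝒪`, then
`𝒲(μqⁿ, νqⁿ) ≤ γⁿ 𝒲(μ,ν) + Δ (P_μ[∃ k<n, X_k ∉ 𝒪] + P_ν[∃ k<n, X_k ∉ 𝒪])`. -/
theorem wasserstein_contraction_of_coupling
    {S : Type*} [MeasurableSpace S] [MetricSpace S] [BorelSpace S]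
    (q : Kernel S S) [IsMarkovKernel q]
    (c : Kernel (S × S) (S × S)) [IsMarkovKernel c]
    (hc1 : ∀ p : S × S, (c p).map Prod.fst = q p.1)
    (hc2 : ∀ p : S × S, (c p).map Prod.snd = q p.2)
    (𝒪 : Set S) (h𝒪 : IsOpen 𝒪)
    (γ : ℝ) (hγ : γ ∈ Set.Ioo (0:ℝ) 1)
    (Δ : ℝ) (hΔ : ∀ x y : S, dist x y ≤ Δ)
    (hcontr : ∀ x ∈ 𝒪, ∀ xt ∈ 𝒪,
      ∫⁻ p, ENNReal.ofReal (dist p.1 p.2) ∂(c (x, xt)) ≤ ENNReal.ofReal (γ * dist x xt))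
    (μ ν : Measure S) [IsProbabilityMeasure μ] [IsProbabilityMeasure ν] (n : ℕ) :
    wassersteinDist dist (chainLaw q μ n) (chainLaw q ν n) ≤
      ENNReal.ofReal γ ^ n * wassersteinDist dist μ ν +
      ENNReal.ofReal Δ * ((1 - stayLaw q 𝒪 μ n Set.univ) + (1 - stayLaw q 𝒪 ν n Set.univ)) := by
  obtain ⟨hγ0, hγ1⟩ := hγ
  have h𝒪m : MeasurableSet 𝒪 := h𝒪.measurableSet
  have hSne : Nonempty S := by
    by_contra h
    rw [not_nonempty_iff] at h
    have h1 := measure_univ (μ := μ)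
    rw [Set.univ_eq_empty_iff.2 h, measure_empty] at h1
    exact zero_ne_one h1
  obtain ⟨x0⟩ := hSne
  have hΔ0 : 0 ≤ Δ := le_trans dist_nonneg (hΔ x0 x0)
  set sμ := stayLaw q 𝒪 μ n Set.univ with hsμdef
  set sν := stayLaw q 𝒪 ν n Set.univ with hsνdef
  set C : ℝ≥0∞ := ENNReal.ofReal Δ * ((1 - sμ) + (1 - sν)) with hC
  haveI : IsProbabilityMeasure (chainLaw q μ n) := ⟨chainLaw_univ q μ n⟩
  haveI : IsProbabilityMeasure (chainLaw q ν n) := ⟨chainLaw_univ q ν n⟩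
  -- Key estimate for each coupling η of μ and ν.
  have key : ∀ η ∈ couplings μ ν,
      wassersteinDist dist (chainLaw q μ n) (chainLaw q ν n) ≤
        ENNReal.ofReal γ ^ n * (∫⁻ p, ENNReal.ofReal (dist p.1 p.2) ∂η) + C := by
    intro η hη
    obtain ⟨hηf, hηs⟩ := hη
    have hA : MeasurableSet (Prod.fst ⁻¹' 𝒪 : Set (S × S)) := measurable_fst h𝒪m
    have hB : MeasurableSet (Prod.snd ⁻¹' 𝒪 : Set (S × S)) := measurable_snd h𝒪m
    set Z := auxChain c Set.univ η n with hZdef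
    set Za := auxChain c (Prod.fst ⁻¹' 𝒪) η n with hZadef
    set Zb := auxChain c (Prod.snd ⁻¹' 𝒪) η n with hZbdef
    set ζ := auxChain c (Prod.fst ⁻¹' 𝒪 ∩ Prod.snd ⁻¹' 𝒪) η n with hζdef
    -- marginals of the full coupled chain
    have hZf : Z.map Prod.fst = chainLaw q μ n := by
      have h := auxChain_map_fst hc1 MeasurableSet.univ hηf n
      rwa [Set.preimage_univ, stayLaw_univ_eq, ← hZdef] at h
    have hZs : Z.map Prod.snd = chainLaw q ν n := by
      have h := auxChain_map_snd hc2 MeasurableSet.univ hηs n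
      rwa [Set.preimage_univ, stayLaw_univ_eq, ← hZdef] at h
    have hZaf : Za.map Prod.fst = stayLaw q 𝒪 μ n := auxChain_map_fst hc1 h𝒪m hηf n
    have hZbs : Zb.map Prod.snd = stayLaw q 𝒪 ν n := auxChain_map_snd hc2 h𝒪m hηs n
    have hZuniv : Z Set.univ = 1 := by
      have h : Z.map Prod.fst Set.univ = chainLaw q μ n Set.univ := by rw [hZf]
      rwa [Measure.map_apply measurable_fst MeasurableSet.univ, Set.preimage_univ,
        chainLaw_univ] at h
    have hζZ : ζ ≤ Z := auxChain_mono Set.inter_subset_left η n |>.trans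
      (auxChain_mono (Set.subset_univ _) η n)
    have hζuniv_le : ζ Set.univ ≤ 1 := hZuniv ▸ Measure.le_iff'.1 hζZ Set.univ
    -- stay probabilities
    have hsμ_eq : Za Set.univ = sμ := by
      rw [hsμdef, ← hZaf, Measure.map_apply measurable_fst MeasurableSet.univ,
        Set.preimage_univ]
    have hsν_eq : Zb Set.univ = sν := by
      rw [hsνdef, ← hZbs, Measure.map_apply measurable_snd MeasurableSet.univ,
        Set.preimage_univ]
    have hsμ1 : sμ ≤ 1 := by
      rw [← hsμ_eq, ← hZuniv]
      exact Measure.le_iff'.1 (auxChain_mono (Set.subset_univ _) η n) _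
    have hsν1 : sν ≤ 1 := by
      rw [← hsν_eq, ← hZuniv]
      exact Measure.le_iff'.1 (auxChain_mono (Set.subset_univ _) η n) _
    have hsum : sμ + sν ≤ ζ Set.univ + 1 := by
      have h := Measure.le_iff'.1 (auxChain_add_le (c := c) hA hB η n) Set.univ
      simp only [Measure.coe_add, Pi.add_apply] at h
      rwa [← hZadef, ← hZbdef, ← hζdef, ← hZdef, hsμ_eq, hsν_eq, hZuniv] at h
    set m := (1 : ℝ≥0∞) - ζ Set.univ with hm
    have hm_top : m ≠ ∞ := (lt_of_le_of_lt tsub_le_self one_lt_top).ne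
    have hm_le : m ≤ (1 - sμ) + (1 - sν) := by
      rw [hm, tsub_le_iff_right]
      have hfin : sμ + sν ≠ ∞ :=
        (ENNReal.add_lt_top.2 ⟨lt_of_le_of_lt hsμ1 one_lt_top,
          lt_of_le_of_lt hsν1 one_lt_top⟩).ne
      refine (ENNReal.add_le_add_iff_right hfin).1 ?_
      have e1 : (1 - sμ) + sμ = 1 := tsub_add_cancel_of_le hsμ1
      have e2 : (1 - sν) + sν = 1 := tsub_add_cancel_of_le hsν1
      have e3 : ((1 - sμ) + (1 - sν) + ζ Set.univ) + (sμ + sν) = 1 + (ζ Set.univ + 1) := by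
        calc ((1 - sμ) + (1 - sν) + ζ Set.univ) + (sμ + sν)
            = ((1 - sμ) + sμ) + (((1 - sν) + sν) + ζ Set.univ) := by ring
          _ = 1 + (ζ Set.univ + 1) := by rw [e1, e2]; ring
      rw [e3]
      exact add_le_add_right hsum 1
    -- leftover measures
    have hζf_le : ζ.map Prod.fst ≤ chainLaw q μ n := hZf ▸ Measure.map_mono hζZ measurable_fst
    have hζs_le : ζ.map Prod.snd ≤ chainLaw q ν n := hZs ▸ Measure.map_mono hζZ measurable_snd
    haveI : IsFiniteMeasure (ζ.map Prod.fst) :=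
      ⟨lt_of_le_of_lt (Measure.le_iff'.1 hζf_le _) (measure_lt_top _ _)⟩
    haveI : IsFiniteMeasure (ζ.map Prod.snd) :=
      ⟨lt_of_le_of_lt (Measure.le_iff'.1 hζs_le _) (measure_lt_top _ _)⟩
    set Lμ := chainLaw q μ n - ζ.map Prod.fst with hLμ
    set Lν := chainLaw q ν n - ζ.map Prod.snd with hLν
    haveI : IsFiniteMeasure Lμ :=
      ⟨lt_of_le_of_lt (Measure.le_iff'.1 Measure.sub_le _) (measure_lt_top _ _)⟩
    haveI : IsFiniteMeasure Lν :=
      ⟨lt_of_le_of_lt (Measure.le_iff'.1 Measure.sub_le _) (measure_lt_top _ _)⟩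
    have hζf_univ : ζ.map Prod.fst Set.univ = ζ Set.univ := by
      rw [Measure.map_apply measurable_fst MeasurableSet.univ, Set.preimage_univ]
    have hζs_univ : ζ.map Prod.snd Set.univ = ζ Set.univ := by
      rw [Measure.map_apply measurable_snd MeasurableSet.univ, Set.preimage_univ]
    have hLμ_univ : Lμ Set.univ = m := by
      rw [hLμ, Measure.sub_apply MeasurableSet.univ hζf_le, hζf_univ, chainLaw_univ, hm]
    have hLν_univ : Lν Set.univ = m := by
      rw [hLν, Measure.sub_apply MeasurableSet.univ hζs_le, hζs_univ, chainLaw_univ, hm]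
    set ρ := m⁻¹ • (Lμ.prod Lν) with hρ
    have hρf : ρ.map Prod.fst = Lμ := by
      rw [hρ, Measure.map_smul, Measure.map_fst_prod, hLν_univ]
      by_cases h0 : m = 0
      · have hL0 : Lμ = 0 := by rw [← Measure.measure_univ_eq_zero, hLμ_univ, h0]
        simp [hL0]
      · rw [smul_smul, ENNReal.inv_mul_cancel h0 hm_top, one_smul]
    have hρs : ρ.map Prod.snd = Lν := by
      rw [hρ, Measure.map_smul, Measure.map_snd_prod, hLμ_univ]
      by_cases h0 : m = 0
      · have hL0 : Lν = 0 := by rw [← Measure.measure_univ_eq_zero, hLν_univ, h0]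
        simp [hL0]
      · rw [smul_smul, ENNReal.inv_mul_cancel h0 hm_top, one_smul]
    -- the coupling ζ + ρ of the laws at time n
    have hmemf : (ζ + ρ).map Prod.fst = chainLaw q μ n := by
      rw [Measure.map_add _ _ measurable_fst, hρf, hLμ, add_comm,
        Measure.sub_add_cancel_of_le hζf_le]
    have hmems : (ζ + ρ).map Prod.snd = chainLaw q ν n := by
      rw [Measure.map_add _ _ measurable_snd, hρs, hLν, add_comm,
        Measure.sub_add_cancel_of_le hζs_le]
    have hWle : wassersteinDist dist (chainLaw q μ n) (chainLaw q ν n)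
        ≤ ∫⁻ p, ENNReal.ofReal (dist p.1 p.2) ∂(ζ + ρ) := by
      unfold wassersteinDist
      exact iInf₂_le (ζ + ρ) ⟨hmemf, hmems⟩
    have hcost1 : ∫⁻ p, ENNReal.ofReal (dist p.1 p.2) ∂ζ
        ≤ ENNReal.ofReal γ ^ n * ∫⁻ p, ENNReal.ofReal (dist p.1 p.2) ∂η := by
      have h := auxChain_cost c h𝒪m hγ0.le hcontr η n
      rwa [Set.prod_eq, ← hζdef] at h
    have hρuniv : ρ Set.univ ≤ m := by
      rw [hρ, Measure.smul_apply, smul_eq_mul]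
      have hpu : (Lμ.prod Lν) Set.univ = m * m := by
        rw [← Set.univ_prod_univ, Measure.prod_prod, hLμ_univ, hLν_univ]
      rw [hpu, ← mul_assoc]
      by_cases h0 : m = 0
      · simp [h0]
      · rw [ENNReal.inv_mul_cancel h0 hm_top, one_mul]
    have hcost2 : ∫⁻ p, ENNReal.ofReal (dist p.1 p.2) ∂ρ ≤ ENNReal.ofReal Δ * m := by
      calc ∫⁻ p, ENNReal.ofReal (dist p.1 p.2) ∂ρ
          ≤ ∫⁻ _, ENNReal.ofReal Δ ∂ρ :=
            lintegral_mono fun p => ENNReal.ofReal_le_ofReal (hΔ _ _)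
        _ = ENNReal.ofReal Δ * ρ Set.univ := lintegral_const _
        _ ≤ ENNReal.ofReal Δ * m := mul_le_mul_right hρuniv _
    calc wassersteinDist dist (chainLaw q μ n) (chainLaw q ν n)
        ≤ ∫⁻ p, ENNReal.ofReal (dist p.1 p.2) ∂(ζ + ρ) := hWle
      _ = (∫⁻ p, ENNReal.ofReal (dist p.1 p.2) ∂ζ)
          + ∫⁻ p, ENNReal.ofReal (dist p.1 p.2) ∂ρ := lintegral_add_measure _ _ _
      _ ≤ ENNReal.ofReal γ ^ n * (∫⁻ p, ENNReal.ofReal (dist p.1 p.2) ∂η)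
          + ENNReal.ofReal Δ * m := add_le_add hcost1 hcost2
      _ ≤ ENNReal.ofReal γ ^ n * (∫⁻ p, ENNReal.ofReal (dist p.1 p.2) ∂η) + C := by
          rw [hC]
          exact add_le_add_right (mul_le_mul_right hm_le _) _
  -- conclude by taking the infimum over couplings
  set W := wassersteinDist dist μ ν with hW
  have hWtop : W ≠ ∞ := by
    have hmem : (μ.prod ν) ∈ couplings μ ν := by
      constructor
      · rw [Measure.map_fst_prod, measure_univ, one_smul]
      · rw [Measure.map_snd_prod, measure_univ, one_smul]
    have hle : W ≤ ENNReal.ofReal Δ := by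
      rw [hW]
      unfold wassersteinDist
      refine le_trans (iInf₂_le (μ.prod ν) hmem) ?_
      calc ∫⁻ p, ENNReal.ofReal (dist p.1 p.2) ∂(μ.prod ν)
          ≤ ∫⁻ _, ENNReal.ofReal Δ ∂(μ.prod ν) :=
            lintegral_mono fun p => ENNReal.ofReal_le_ofReal (hΔ _ _)
        _ = ENNReal.ofReal Δ := by
            haveI : IsProbabilityMeasure (μ.prod ν) := by infer_instance
            rw [lintegral_const, measure_univ, mul_one]
    exact (lt_of_le_of_lt hle ENNReal.ofReal_lt_top).ne
  refine ENNReal.le_of_forall_pos_le_add fun ε hε _ => ?_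
  have hεne : (ε : ℝ≥0∞) ≠ 0 := by exact_mod_cast hε.ne'
  have hlt : W < W + ε := ENNReal.lt_add_right hWtop hεne
  obtain ⟨η, hη, hηlt⟩ : ∃ η ∈ couplings μ ν,
      (∫⁻ p, ENNReal.ofReal (dist p.1 p.2) ∂η) < W + ε := by
    have h : wassersteinDist dist μ ν < W + ε := hW ▸ hlt
    unfold wassersteinDist at h
    rw [iInf_lt_iff] at h
    obtain ⟨η, hη⟩ := h
    rw [iInf_lt_iff] at hη
    obtain ⟨hmem, hlt'⟩ := hη
    exact ⟨η, hmem, hlt'⟩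
  have hγn : ENNReal.ofReal γ ^ n ≤ 1 := pow_le_one' (ENNReal.ofReal_le_one.2 hγ1.le) n
  calc wassersteinDist dist (chainLaw q μ n) (chainLaw q ν n)
      ≤ ENNReal.ofReal γ ^ n * (∫⁻ p, ENNReal.ofReal (dist p.1 p.2) ∂η) + C := key η hη
    _ ≤ ENNReal.ofReal γ ^ n * (W + ε) + C := by
        exact add_le_add_left (mul_le_mul_right hηlt.le _) _
    _ = (ENNReal.ofReal γ ^ n * W + ENNReal.ofReal γ ^ n * ε) + C := by rw [mul_add]
    _ ≤ (ENNReal.ofReal γ ^ n * W + ε) + C := by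
        exact add_le_add_left (add_le_add_right (mul_le_of_le_one_left zero_le hγn) _) _
    _ = (ENNReal.ofReal γ ^ n * W + C) + ε := by ring
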